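/- (Free-fermion eigen-energy identity.) Let λ be a partition with diagonal length d. Then Σ_{i=1}^{d} [ (λ_i − i + 1/2)² − (λ^t_i − i + 1/2)² ] = Σ_{i=1}^{ℓ(λ)} λ_i (λ_i − 2i + 1), as an equality of rational numbers, where ℓ(λ) is the number of nonzero parts of λ. -/

import Mathlib

open Finset

/-- The conjugate partition: `conjugate f j` is the number of indices `i` with part
`f i > j`, i.e. (with 0-indexed parts) `λᵗ_{j+1} = #{i ≥ 1 : λ_i ≥ j+1}`. -/
noncomputable def conjugate (f : ℕ → ℕ) (j : ℕ) : ℕ := Nat.card {i : ℕ | j < f i}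

/-- The diagonal length `d(λ)`: the number of indices `i ≥ 1` with `λ_i ≥ i`
(0-indexed: parts `f i` with `i < f i`). -/
noncomputable def diagLen (f : ℕ → ℕ) : ℕ := Nat.card {i : ℕ | i < f i}

/-- `nStat f = n(λ) = Σ_{i ≥ 1} (i−1)·λ_i` (0-indexed: `Σ_i i·f i`). -/
noncomputable def nStat (f : ℕ → ℕ) : ℕ := ∑' i : ℕ, i * f i

lemma gauss (n : ℕ) : ∑ k ∈ range n, (k : ℚ) = n * (n - 1) / 2 := by
  induction n with
  | zero => simp
  | succ m ih => rw [Finset.sum_range_succ, ih]; push_cast; ring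

lemma gauss' (n : ℕ) : ∑ k ∈ range n, ((k : ℚ) + 1) = n * (n + 1) / 2 := by
  induction n with
  | zero => simp
  | succ m ih => rw [Finset.sum_range_succ, ih]; push_cast; ring

lemma card_initseg {P : ℕ → Prop} (hdc : ∀ i j, i ≤ j → P j → P i)
    (M : ℕ) (hM : ¬ P M) (i : ℕ) : P i ↔ i < Nat.card {i | P i} := by
  have hne : ({i | ¬ P i} : Set ℕ).Nonempty := ⟨M, hM⟩
  set n := sInf {i | ¬ P i} with hn
  have hnP : ¬ P n := Nat.sInf_mem hne
  have hset : {i | P i} = Set.Iio n := by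
    ext k
    simp only [Set.mem_setOf_eq, Set.mem_Iio]
    constructor
    · intro hk
      by_contra h
      exact hnP (hdc n k (Nat.le_of_not_lt h) hk)
    · intro hk
      by_contra h
      exact absurd (Nat.sInf_le h) (Nat.not_le.mpr hk)
  rw [hset, Nat.card_eq_fintype_card, ← Set.toFinset_card, Set.toFinset_Iio, Nat.card_Iio]
  exact Set.ext_iff.mp hset i

/-- Free-fermion eigen-energy identity:
`Σ_{i=1}^{d} [(λ_i − i + 1/2)² − (λᵗ_i − i + 1/2)²] = Σ_{i=1}^{ℓ(λ)} λ_i(λ_i − 2i + 1)`. -/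
theorem free_fermion_eigenenergy
    (f : ℕ → ℕ) (hmono : Antitone f) (hfin : ∃ M, ∀ i, M ≤ i → f i = 0)
    (d : ℕ) (hd : d = diagLen f) :
    ∑ i ∈ range d,
        (((f i : ℚ) - ((i : ℚ) + 1) + 1 / 2) ^ 2
          - ((conjugate f i : ℚ) - ((i : ℚ) + 1) + 1 / 2) ^ 2)
      = ∑ i ∈ range (conjugate f 0),
          (f i : ℚ) * ((f i : ℚ) - 2 * ((i : ℚ) + 1) + 1) := by
  obtain ⟨M, hM⟩ := hfin
  set g : ℕ → ℕ := conjugate f with hg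
  set L : ℕ := g 0 with hL
  have hconj : ∀ j i, j < f i ↔ i < g j := by
    intro j i
    exact card_initseg (fun a b hab hb => lt_of_lt_of_le hb (hmono hab)) M
      (by simp [hM M le_rfl]) i
  have hdiag : ∀ i, i < f i ↔ i < d := by
    intro i
    rw [hd]
    exact card_initseg (fun a b hab hb => lt_of_lt_of_le (lt_of_le_of_lt hab hb) (hmono hab)) M
      (by simp [hM M le_rfl]) i
  have hL0 : ∀ i, 0 < f i ↔ i < L := hconj 0
  have hdL : d ≤ L := by
    rcases Nat.eq_zero_or_pos d with h | h
    · omega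
    · have h1 : d - 1 < f (d - 1) := (hdiag _).2 (by omega)
      have h2 := (hL0 (d - 1)).1 (by omega)
      omega
  have hgL : ∀ j i, i < g j → i < L := fun j i h =>
    (hL0 i).1 (lt_of_le_of_lt (Nat.zero_le j) ((hconj j i).2 h))
  have hgd : ∀ j, j < g j ↔ j < d := fun j => ((hconj j j).symm).trans (hdiag j)
  -- per-row content split
  have split : ∀ i ∈ range L, ∑ j ∈ range (f i), ((j : ℚ) - i)
      = (∑ j ∈ range (min i (f i)), ((j : ℚ) - i)) + ∑ j ∈ Ico i (f i), ((j : ℚ) - i) := by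
    intro i _
    rcases le_or_gt (f i) i with h | h
    · rw [min_eq_right h, Finset.Ico_eq_empty (by omega), Finset.sum_empty, add_zero]
    · rw [min_eq_left h.le]
      simp only [Finset.range_eq_Ico]
      rw [← Finset.sum_Ico_consecutive _ (Nat.zero_le i) h.le]
  -- above-diagonal part
  have Tplus : ∑ i ∈ range L, ∑ j ∈ Ico i (f i), ((j : ℚ) - i)
      = ∑ i ∈ range d, ((f i : ℚ) - i) * ((f i : ℚ) - i - 1) / 2 := by
    have h0 : ∀ i ∈ range L, i ∉ range d → (∑ j ∈ Ico i (f i), ((j : ℚ) - i)) = 0 := by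
      intro i _ hi
      have hfi : f i ≤ i := by
        by_contra h
        exact hi (mem_range.mpr ((hdiag i).1 (not_le.mp h)))
      rw [Finset.Ico_eq_empty (by omega), Finset.sum_empty]
    rw [← Finset.sum_subset (Finset.range_subset_range.mpr hdL) h0]
    refine sum_congr rfl fun i hi => ?_
    have hfi : i < f i := (hdiag i).2 (mem_range.mp hi)
    rw [Finset.sum_Ico_eq_sum_range]
    have hc : ∀ k ∈ range (f i - i), ((i + k : ℕ) : ℚ) - i = (k : ℚ) := by
      intro k _; push_cast; ring
    rw [Finset.sum_congr rfl hc, gauss]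
    have hcast : ((f i - i : ℕ) : ℚ) = (f i : ℚ) - i := by
      rw [Nat.cast_sub hfi.le]
    rw [hcast]
  -- below-diagonal part
  have Tminus : ∑ i ∈ range L, ∑ j ∈ range (min i (f i)), ((i : ℚ) - j)
      = ∑ j ∈ range d, ((g j : ℚ) - j) * ((g j : ℚ) - j - 1) / 2 := by
    have step1 : ∀ i ∈ range L, range (min i (f i)) = (range L).filter (fun j => j < i ∧ j < f i) := by
      intro i hi
      have hiL := mem_range.mp hi
      ext j
      simp only [mem_range, mem_filter]
      omega
    rw [Finset.sum_congr rfl (fun i hi => by rw [step1 i hi, Finset.sum_filter])]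
    rw [Finset.sum_comm]
    have step2 : ∀ j, (∑ i ∈ range L, if j < i ∧ j < f i then (i : ℚ) - (j : ℚ) else 0)
        = ∑ i ∈ Ioo j (g j), ((i : ℚ) - j) := by
      intro j
      rw [← Finset.sum_filter]
      congr 1
      ext i
      simp only [mem_filter, mem_range, mem_Ioo]
      constructor
      · rintro ⟨hiL, hji, hjf⟩
        exact ⟨hji, (hconj j i).1 hjf⟩
      · rintro ⟨hji, hig⟩
        exact ⟨hgL j i hig, hji, (hconj j i).2 hig⟩
    rw [Finset.sum_congr rfl (fun j _ => step2 j)]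
    have h0 : ∀ j ∈ range L, j ∉ range d → (∑ i ∈ Ioo j (g j), ((i : ℚ) - j)) = 0 := by
      intro j _ hj
      have hgj : g j ≤ j := by
        by_contra h
        exact hj (mem_range.mpr ((hgd j).1 (not_le.mp h)))
      rw [Finset.Ioo_eq_empty (by omega), Finset.sum_empty]
    rw [← Finset.sum_subset (Finset.range_subset_range.mpr hdL) h0]
    refine sum_congr rfl fun j hj => ?_
    have hjg : j < g j := (hgd j).2 (mem_range.mp hj)
    rw [← Finset.Ico_add_one_left_eq_Ioo, Finset.sum_Ico_eq_sum_range]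
    have hc : ∀ k ∈ range (g j - (j + 1)), ((j + 1 + k : ℕ) : ℚ) - j = (k : ℚ) + 1 := by
      intro k _; push_cast; ring
    rw [Finset.sum_congr rfl hc, gauss']
    have hcast : ((g j - (j + 1) : ℕ) : ℚ) = (g j : ℚ) - j - 1 := by
      rw [Nat.cast_sub hjg]; push_cast; ring
    rw [hcast]; ring
  -- total content sum
  have main : ∑ i ∈ range L, ∑ j ∈ range (f i), ((j : ℚ) - i)
      = (∑ i ∈ range d, ((f i : ℚ) - i) * ((f i : ℚ) - i - 1) / 2)
        - ∑ j ∈ range d, ((g j : ℚ) - j) * ((g j : ℚ) - j - 1) / 2 := by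
    rw [← Tplus, ← Tminus, ← Finset.sum_sub_distrib]
    refine sum_congr rfl fun i hi => ?_
    have hz : (∑ j ∈ range (min i (f i)), ((j : ℚ) - i))
        + ∑ j ∈ range (min i (f i)), ((i : ℚ) - j) = 0 := by
      rw [← Finset.sum_add_distrib]
      apply Finset.sum_eq_zero
      intro j _; ring
    have hs := split i hi
    linarith
  have E1 : ∑ i ∈ range d,
        (((f i : ℚ) - ((i : ℚ) + 1) + 1 / 2) ^ 2 - ((g i : ℚ) - ((i : ℚ) + 1) + 1 / 2) ^ 2)
      = 2 * (∑ i ∈ range d, ((f i : ℚ) - i) * ((f i : ℚ) - i - 1) / 2)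
        - 2 * ∑ j ∈ range d, ((g j : ℚ) - j) * ((g j : ℚ) - j - 1) / 2 := by
    rw [Finset.mul_sum, Finset.mul_sum, ← Finset.sum_sub_distrib]
    refine sum_congr rfl fun i _ => by ring
  have E2 : ∑ i ∈ range L, (f i : ℚ) * ((f i : ℚ) - 2 * ((i : ℚ) + 1) + 1)
      = 2 * ∑ i ∈ range L, ∑ j ∈ range (f i), ((j : ℚ) - i) := by
    rw [Finset.mul_sum]
    refine sum_congr rfl fun i _ => ?_
    rw [Finset.sum_sub_distrib, gauss, Finset.sum_const, card_range, nsmul_eq_mul]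
    ring
  rw [E1, E2, main]
  ring
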